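/- Let p = 2, n = 2m, q = 2^m, and let U = {x ∈ F_{2^n} : x·x^q = 1} be the unit circle. Let d = s(q − 1) + 1 with s a nonnegative integer and gcd(d, 2^n − 1) = 1. Then for every a ∈ F_{2^n}*, the Walsh transform W_d(a) = ∑_{x ∈ F_{2^n}} (−1)^{Tr(x^d + ax)} equals (N(a) − 1)·2^m, where N(a) is the number of x ∈ U satisfying x^{2s−1} + a x^s + a^q x^{s−1} + 1 = 0. -/

import Mathlib

noncomputable instance (p n : ℕ) [Fact p.Prime] : Fintype (GaloisField p n) :=
  Fintype.ofFinite _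

/-- `ω = exp(2πi/p)` raised to (the integer lift of) an element of `F_p`. -/
noncomputable def ew (p : ℕ) (x : ZMod p) : ℂ :=
  Complex.exp (2 * Real.pi * Complex.I / p) ^ x.val

/-- The absolute trace from `F_{p^n}` to `F_p`. -/
noncomputable def Tr (p n : ℕ) [Fact p.Prime] (x : GaloisField p n) : ZMod p :=
  Algebra.trace (ZMod p) (GaloisField p n) x

instance : Fact (Nat.Prime 2) := ⟨Nat.prime_two⟩

lemma gf_card (n : ℕ) (hn : n ≠ 0) : Fintype.card (GaloisField 2 n) = 2 ^ n := by
  rw [← Nat.card_eq_fintype_card, GaloisField.card 2 n hn]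

noncomputable def frobAE (n : ℕ) : GaloisField 2 n ≃ₐ[ZMod 2] GaloisField 2 n :=
  AlgEquiv.ofBijective
    { toRingHom := frobenius (GaloisField 2 n) 2
      commutes' := fun r => by
        have h : r ^ 2 = r := by revert r; decide
        simp [frobenius_def, ← map_pow, h] }
    (Finite.injective_iff_bijective.mp (frobenius_inj (GaloisField 2 n) 2))

lemma frobAE_pow (n i : ℕ) (z : GaloisField 2 n) : ((frobAE n) ^ i) z = z ^ 2 ^ i := by
  induction i with
  | zero => simp
  | succ i ih =>
    rw [pow_succ', AlgEquiv.mul_apply, ih]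
    show (z ^ 2 ^ i) ^ 2 = z ^ 2 ^ (i + 1)
    rw [← pow_mul, pow_succ]

lemma frobAE_ne (n : ℕ) (hn : n ≠ 0) {i j : ℕ} (hij : i < j) (hj : j < n) :
    (frobAE n) ^ i ≠ (frobAE n) ^ j := by
  classical
  intro heq
  obtain ⟨ζ, hζ⟩ := IsCyclic.exists_generator (α := (GaloisField 2 n)ˣ)
  have hord : orderOf ζ = 2 ^ n - 1 := by
    rw [orderOf_eq_card_of_forall_mem_zpowers hζ, Nat.card_eq_fintype_card, Fintype.card_units, gf_card n hn]
  have h1 : (ζ : GaloisField 2 n) ^ 2 ^ i = (ζ : GaloisField 2 n) ^ 2 ^ j := by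
    have := congrArg (fun σ : GaloisField 2 n ≃ₐ[ZMod 2] GaloisField 2 n => σ (ζ : GaloisField 2 n)) heq
    simpa [frobAE_pow] using this
  have h2 : ζ ^ 2 ^ i = ζ ^ 2 ^ j := Units.ext (by push_cast [h1]; norm_cast)
  have h3 : 2 ^ i ≡ 2 ^ j [MOD orderOf ζ] := (pow_eq_pow_iff_modEq).mp h2
  have hlt : 2 ^ j < 2 ^ n - 1 := by
    have h4 : 2 ^ (j+1) ≤ 2 ^ n := Nat.pow_le_pow_right (by norm_num) hj
    have h5 : (2:ℕ) ^ j ≥ 2 := by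
      have : (2:ℕ)^1 ≤ 2^j := Nat.pow_le_pow_right (by norm_num) (by omega)
      simpa using this
    have : 2 * 2 ^ j ≤ 2 ^ n := by rw [← pow_succ'] ; exact h4
    omega
  have hlt' : 2 ^ i < 2 ^ j := Nat.pow_lt_pow_right (by norm_num) hij
  rw [hord] at h3
  unfold Nat.ModEq at h3
  rw [Nat.mod_eq_of_lt (by omega), Nat.mod_eq_of_lt hlt] at h3
  omega

lemma trace_frob_sum (n : ℕ) (hn : n ≠ 0) (z : GaloisField 2 n) :
    algebraMap (ZMod 2) (GaloisField 2 n) (Tr 2 n z) = ∑ i ∈ Finset.range n, z ^ 2 ^ i := by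
  rw [Tr, trace_eq_sum_automorphisms]
  have hcardG : Fintype.card (GaloisField 2 n ≃ₐ[ZMod 2] GaloisField 2 n) = n := by
    rw [← Nat.card_eq_fintype_card, IsGalois.card_aut_eq_finrank, GaloisField.finrank 2 hn]
  have hinj : Function.Injective (fun i : Fin n => (frobAE n) ^ (i : ℕ)) := by
    intro i j h
    by_contra hne
    rcases lt_or_gt_of_ne (fun h' : (i:ℕ) = (j:ℕ) => hne (Fin.ext h')) with h' | h'
    · exact frobAE_ne n hn h' j.isLt h
    · exact frobAE_ne n hn h' i.isLt h.symm
  have hbij : Function.Bijective (fun i : Fin n => (frobAE n) ^ (i : ℕ)) :=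
    (Fintype.bijective_iff_injective_and_card _).mpr ⟨hinj, by simp [hcardG]⟩
  rw [← Fintype.sum_bijective _ hbij (fun i : Fin n => z ^ 2 ^ (i:ℕ)) (fun σ => σ z)
      (fun i => (frobAE_pow n i z).symm)]
  rw [Finset.sum_range (fun i => z ^ 2 ^ i)]


lemma ew_aux : Complex.exp (2 * Real.pi * Complex.I / (2:ℕ)) = -1 := by
  rw [show (2 * (Real.pi:ℂ) * Complex.I / (2:ℕ)) = Real.pi * Complex.I by push_cast; ring,
    Complex.exp_pi_mul_I]

lemma ew_eq (x : ZMod 2) : ew 2 x = (-1 : ℂ) ^ x.val := by rw [ew, ew_aux]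

lemma ew_zero : ew 2 0 = 1 := by rw [ew_eq]; simp

lemma ew_ne_zero {t : ZMod 2} (h : t ≠ 0) : ew 2 t = -1 := by
  have : t = 1 := by revert h; revert t; decide
  subst this; rw [ew_eq, show ZMod.val (1 : ZMod 2) = 1 from rfl]; norm_num

lemma ew_add (s t : ZMod 2) : ew 2 (s + t) = ew 2 s * ew 2 t := by
  have h : ∀ x : ZMod 2, x = 0 ∨ x = 1 := by decide
  have v0 : ZMod.val (0 : ZMod 2) = 0 := rfl
  have v1 : ZMod.val (1 : ZMod 2) = 1 := rfl
  have v2 : ZMod.val (1 + 1 : ZMod 2) = 0 := rfl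
  rcases h s with rfl | rfl <;> rcases h t with rfl | rfl <;>
    simp only [ew_eq, add_zero, zero_add, v0, v1, v2] <;> norm_num

open Finset Polynomial

lemma card_pow_eq_one_le (F : Type*) [Field F] [Fintype F] [DecidableEq F] (k : ℕ) (hk : k ≠ 0) :
    (univ.filter fun x : F => x ^ k = 1).card ≤ k := by
  have hsub : (univ.filter fun x : F => x ^ k = 1) ⊆ (nthRoots k (1:F)).toFinset := by
    intro x hx
    rw [Multiset.mem_toFinset, mem_nthRoots (Nat.pos_of_ne_zero hk)]
    exact (mem_filter.mp hx).2
  calc (univ.filter fun x : F => x ^ k = 1).card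
      ≤ (nthRoots k (1:F)).toFinset.card := Finset.card_le_card hsub
    _ ≤ Multiset.card (nthRoots k (1:F)) := Multiset.toFinset_card_le _
    _ ≤ k := card_nthRoots k 1

lemma card_circle (F : Type*) [Field F] [Fintype F] [DecidableEq F] (q : ℕ) (hq : 2 ≤ q)
    (hcard : Fintype.card F = q * q) :
    (univ.filter fun x : F => x ^ (q + 1) = 1).card = q + 1 ∧
    (univ.filter fun x : F => x ^ (q - 1) = 1).card = q - 1 := by
  set S0 : Finset F := univ.erase 0 with hS0
  have hS0card : S0.card = q * q - 1 := by
    rw [hS0, Finset.card_erase_of_mem (mem_univ _), Finset.card_univ, hcard]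
  set ψ : F → F := fun x => x ^ (q - 1) with hψ
  set T : Finset F := S0.image ψ with hT
  have hmem : ∀ x ∈ S0, ψ x ∈ T := fun x hx => mem_image_of_mem ψ hx
  have hfib := Finset.card_eq_sum_card_fiberwise hmem
  have hfibcard : ∀ t ∈ T,
      (S0.filter fun x => ψ x = t).card = (univ.filter fun x : F => x ^ (q - 1) = 1).card := by
    intro t ht
    obtain ⟨x₀, hx₀S, hx₀⟩ := Finset.mem_image.mp ht
    have hx0ne : x₀ ≠ 0 := (Finset.mem_erase.mp hx₀S).1
    have htne : t ≠ 0 := by rw [← hx₀]; exact pow_ne_zero _ hx0ne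
    apply Finset.card_nbij' (i := fun x => x * x₀⁻¹) (j := fun l => l * x₀)
    · intro x hx
      obtain ⟨hxS, hxψ⟩ := Finset.mem_filter.mp hx
      refine Finset.mem_filter.mpr ⟨mem_univ _, ?_⟩
      rw [mul_pow, inv_pow]
      rw [hψ] at hxψ; simp only at hxψ
      rw [hxψ, ← hx₀]
      field_simp
      rfl
    · intro l hl
      obtain ⟨-, hl1⟩ := Finset.mem_filter.mp hl
      have hlne : l ≠ 0 := by
        intro h; rw [h, zero_pow (by omega)] at hl1; exact one_ne_zero hl1.symm
      refine Finset.mem_filter.mpr ⟨Finset.mem_erase.mpr ⟨mul_ne_zero hlne hx0ne, mem_univ _⟩, ?_⟩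
      show (l * x₀) ^ (q - 1) = t
      rw [mul_pow, hl1, one_mul]
      exact hx₀
    · intro x hx; field_simp
    · intro l hl; field_simp
  rw [Finset.sum_congr rfl hfibcard, Finset.sum_const, smul_eq_mul] at hfib
  -- hfib : S0.card = T.card * Kstar.card
  have hTle : T.card ≤ q + 1 := by
    refine le_trans (Finset.card_le_card ?_) (card_pow_eq_one_le F (q+1) (by omega))
    intro t ht
    obtain ⟨x, hxS, hx⟩ := Finset.mem_image.mp ht
    have hxne : x ≠ 0 := (Finset.mem_erase.mp hxS).1
    refine Finset.mem_filter.mpr ⟨mem_univ _, ?_⟩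
    rw [← hx]
    show (x ^ (q-1)) ^ (q + 1) = 1
    rw [← pow_mul]
    have harith : (q - 1) * (q + 1) = q * q - 1 := by
      have h1 : 1 ≤ q := by omega
      have h2 : 1 ≤ q * q := Nat.one_le_iff_ne_zero.mpr (by positivity)
      zify [h1, h2]; ring
    rw [harith, ← hcard]
    exact FiniteField.pow_card_sub_one_eq_one x hxne
  have hKle : (univ.filter fun x : F => x ^ (q - 1) = 1).card ≤ q - 1 :=
    card_pow_eq_one_le F (q-1) (by omega)
  have hQ1 : q * q - 1 = (q + 1) * (q - 1) := by
    have h1 : 1 ≤ q := by omega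
    have h2 : 1 ≤ q * q := Nat.one_le_iff_ne_zero.mpr (by positivity)
    zify [h1, h2]; ring
  rw [hS0card, hQ1] at hfib
  set A := T.card
  set B := (univ.filter fun x : F => x ^ (q - 1) = 1).card
  have hA1 : A = q + 1 := by
    have hAB_le : A * B ≤ A * (q - 1) := Nat.mul_le_mul_left A hKle
    have h2 : (q + 1) * (q - 1) ≤ A * (q - 1) := hfib ▸ hAB_le
    have h3 : q + 1 ≤ A := Nat.le_of_mul_le_mul_right h2 (by omega)
    omega
  have hA2 : B = q - 1 := by
    rw [hA1] at hfib
    exact (Nat.eq_of_mul_eq_mul_left (by omega) hfib.symm)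
  have hA : A = q + 1 ∧ B = q - 1 := ⟨hA1, hA2⟩
  refine ⟨?_, hA.2⟩
  -- U card: T ⊆ U-filter and both bounded
  have hTsub : T ⊆ univ.filter fun x : F => x ^ (q + 1) = 1 := by
    intro t ht
    obtain ⟨x, hxS, hx⟩ := Finset.mem_image.mp ht
    have hxne : x ≠ 0 := (Finset.mem_erase.mp hxS).1
    refine Finset.mem_filter.mpr ⟨mem_univ _, ?_⟩
    rw [← hx]
    show (x ^ (q-1)) ^ (q + 1) = 1
    rw [← pow_mul]
    have harith : (q - 1) * (q + 1) = q * q - 1 := by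
      have h1 : 1 ≤ q := by omega
      have h2 : 1 ≤ q * q := Nat.one_le_iff_ne_zero.mpr (by positivity)
      zify [h1, h2]; ring
    rw [harith, ← hcard]
    exact FiniteField.pow_card_sub_one_eq_one x hxne
  have := Finset.card_le_card hTsub
  have hUle := card_pow_eq_one_le F (q+1) (by omega)
  omega
lemma Tr_add (n : ℕ) (x y : GaloisField 2 n) : Tr 2 n (x + y) = Tr 2 n x + Tr 2 n y := by
  simp [Tr, map_add]

lemma tr_zero_of_subfield (m : ℕ) (hm : 1 ≤ m) (z : GaloisField 2 (2*m)) (hz : z ^ 2^m = z) :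
    Tr 2 (2*m) z = 0 := by
  have hn : 2*m ≠ 0 := by omega
  apply (algebraMap (ZMod 2) (GaloisField 2 (2*m))).injective
  rw [map_zero, trace_frob_sum (2*m) hn,
    show Finset.range (2*m) = Finset.range (m + m) from by rw [two_mul], Finset.sum_range_add]
  have hterm : ∀ i, z ^ 2^(m+i) = z ^ 2^i := fun i => by rw [pow_add, pow_mul, hz]
  rw [Finset.sum_congr rfl (fun i _ => hterm i)]
  exact CharTwo.add_self_eq_zero _

lemma niho_inner_sum (m : ℕ) (hm : 1 ≤ m) [DecidableEq (GaloisField 2 (2*m))]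
    (K : Finset (GaloisField 2 (2*m))) (hKmem : ∀ x, x ∈ K ↔ x ^ 2^m = x)
    (hKq : K.card = 2^m)
    (c : GaloisField 2 (2*m)) :
    ∑ l ∈ K, ew 2 (Tr 2 (2*m) (l * c)) =
      if c ^ 2^m = c then ((2^m : ℕ) : ℂ) else 0 := by
  set q : ℕ := 2^m with hq
  have hn : 2*m ≠ 0 := by omega
  have hQcard : Fintype.card (GaloisField 2 (2*m)) = 2^(2*m) := gf_card _ hn
  have hpc : ∀ x : GaloisField 2 (2*m), x ^ 2^(2*m) = x := fun x => by rw [← hQcard]; exact FiniteField.pow_card x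
  have hqq : q * q = 2^(2*m) := by rw [hq, ← pow_add, two_mul]
  by_cases hc : c ^ q = c
  · rw [if_pos hc]
    have h1 : ∀ l ∈ K, ew 2 (Tr 2 (2*m) (l * c)) = 1 := by
      intro l hl
      have hlq : l ^ q = l := (hKmem l).mp hl
      have : (l * c) ^ q = l * c := by rw [mul_pow, hlq, hc]
      rw [tr_zero_of_subfield m hm _ this, ew_zero]
    rw [Finset.sum_congr rfl h1, Finset.sum_const, hKq]
    simp
  · rw [if_neg hc]
    -- construct y ∈ K with Tr (y*c) ≠ 0
    set b : GaloisField 2 (2*m) := c ^ q + c with hb'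
    have hb : b ≠ 0 := by
      intro h
      apply hc
      have h2 : c ^ q - c = 0 := by rw [CharTwo.sub_eq_add]; exact h
      exact sub_eq_zero.mp h2
    have hbq : b ^ q = b := by
      rw [hb', hq, add_pow_char_pow, ← hq, ← pow_mul, hqq, hpc]
      exact add_comm _ _
    have hex : ∃ μ : GaloisField 2 (2*m), μ ^ q = μ ∧ (∑ i ∈ Finset.range m, μ ^ 2^i) ≠ 0 := by
      by_contra hall
      push_neg at hall
      set P : Polynomial (GaloisField 2 (2*m)) := ∑ i ∈ Finset.range m, Polynomial.X ^ 2^i with hP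
      have hco : P.coeff 1 = 1 := by
        rw [hP, Polynomial.finset_sum_coeff]
        rw [Finset.sum_eq_single 0]
        · norm_num [Polynomial.coeff_X_pow]
        · intro i hi hne
          rw [Polynomial.coeff_X_pow, if_neg]
          have : 2 ≤ 2^i := by
            calc (2:ℕ) = 2^1 := by norm_num
            _ ≤ 2^i := Nat.pow_le_pow_right (by norm_num) (by omega)
          omega
        · intro h
          exact absurd (Finset.mem_range.mpr (by omega)) h
      have hPne : P ≠ 0 := by
        intro h
        rw [h, Polynomial.coeff_zero] at hco
        exact one_ne_zero hco.symm
      have hdeg : P.natDegree < q := by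
        have h1 : P.natDegree ≤ 2^(m-1) := by
          apply Polynomial.natDegree_sum_le_of_forall_le
          intro i hi
          rw [Polynomial.natDegree_X_pow]
          exact Nat.pow_le_pow_right (by norm_num) (by
            have := Finset.mem_range.mp hi; omega)
        have h2 : (2:ℕ)^(m-1) < 2^m := Nat.pow_lt_pow_right (by norm_num) (by omega)
        omega
      have hsub : K ⊆ P.roots.toFinset := by
        intro μ hμ
        rw [Multiset.mem_toFinset, Polynomial.mem_roots hPne]
        rw [Polynomial.IsRoot.def]
        rw [hP, Polynomial.eval_finset_sum]
        simp only [Polynomial.eval_pow, Polynomial.eval_X]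
        exact hall μ ((hKmem μ).mp hμ)
      have h4 := Finset.card_le_card hsub
      rw [hKq] at h4
      have h5 := Multiset.toFinset_card_le P.roots
      have h6 := Polynomial.card_roots' P
      omega
    obtain ⟨μ, hμq, hμtr⟩ := hex
    set y : GaloisField 2 (2*m) := μ * b⁻¹ with hy
    have hyq : y ^ q = y := by rw [hy, mul_pow, hμq, inv_pow, hbq]
    have hyK : y ∈ K := (hKmem y).mpr hyq
    have htr : Tr 2 (2*m) (y * c) ≠ 0 := by
      intro h0
      apply hμtr
      have hcast := trace_frob_sum (2*m) hn (y * c)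
      rw [h0, map_zero] at hcast
      have hsplit : ∑ i ∈ Finset.range (2*m), (y*c) ^ 2^i = ∑ i ∈ Finset.range m, μ ^ 2^i := by
        rw [show Finset.range (2*m) = Finset.range (m + m) from by rw [two_mul],
          Finset.sum_range_add]
        have hterm : ∀ i, (y*c) ^ 2^(m+i) = ((y*c)^q) ^ 2^i := fun i => by
          rw [pow_add, pow_mul, hq]
        rw [Finset.sum_congr rfl (fun i _ => hterm i), ← Finset.sum_add_distrib]
        refine Finset.sum_congr rfl (fun i _ => ?_)
        have key : (y*c) + (y*c)^q = μ := by
          rw [mul_pow, hyq, ← mul_add, show c + c ^ q = b by rw [hb']; exact add_comm _ _, hy,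
            mul_assoc, inv_mul_cancel₀ hb, mul_one]
        rw [← key, add_pow_char_pow]
      rw [hsplit] at hcast
      exact hcast.symm
    set S : ℂ := ∑ l ∈ K, ew 2 (Tr 2 (2*m) (l * c)) with hS
    have hKclose : ∀ l ∈ K, l + y ∈ K := by
      intro l hl
      have hlq : l ^ q = l := (hKmem l).mp hl
      refine (hKmem _).mpr ?_
      rw [hq] at hlq hyq ⊢
      rw [add_pow_char_pow, hlq, hyq]
    have hinv : ∀ l : GaloisField 2 (2*m), l + y + y = l := by
      intro l
      rw [add_assoc, CharTwo.add_self_eq_zero, add_zero]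
    have htrans : S = ∑ l ∈ K, ew 2 (Tr 2 (2*m) ((l + y) * c)) := by
      rw [hS]
      refine Finset.sum_nbij' (i := fun l => l + y) (j := fun l => l + y)
        hKclose hKclose (fun l _ => hinv l) (fun l _ => hinv l) ?_
      intro l hl
      rw [hinv l]
    have hfactor : S = S * (-1) := by
      calc S = ∑ l ∈ K, ew 2 (Tr 2 (2*m) ((l + y) * c)) := htrans
        _ = ∑ l ∈ K, ew 2 (Tr 2 (2*m) (l * c)) * ew 2 (Tr 2 (2*m) (y * c)) := by
            refine Finset.sum_congr rfl (fun l hl => ?_)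
            rw [add_mul, Tr_add, ew_add]
        _ = S * ew 2 (Tr 2 (2*m) (y * c)) := by rw [← Finset.sum_mul]
        _ = S * (-1) := by rw [ew_ne_zero htr]
    have h2S : S * 2 = 0 := by linear_combination hfactor
    have : S = 0 := by
      rcases mul_eq_zero.mp h2S with h | h
      · exact h
      · norm_num at h
    exact this
lemma cond_equiv (m s d : ℕ) (hm : 1 ≤ m) (hd : d = s * (2^m - 1) + 1)
    (a u : GaloisField 2 (2*m)) (hu : u ^ (2^m + 1) = 1) :
    ((u^d + a*u) ^ (2^m) = u^d + a*u) ↔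
      (u^2) ^ (2*(s:ℤ) - 1) + a * (u^2)^(s:ℤ) + a^(2^m) * (u^2)^((s:ℤ)-1) + 1 = 0 := by
  set q : ℕ := 2^m with hq
  have hu0 : u ≠ 0 := by
    intro h
    rw [h, zero_pow (by positivity)] at hu
    exact one_ne_zero hu.symm
  have huz : u ^ ((q:ℤ) + 1) = 1 := by
    have h2 := hu
    rw [← zpow_natCast u (q+1)] at h2
    push_cast at h2
    exact h2
  have key : ∀ j t : ℤ, u ^ (j + ((q:ℤ)+1) * t) = u ^ j := by
    intro j t
    rw [zpow_add₀ hu0, zpow_mul, huz, one_zpow, mul_one]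
  have hcast : ((2^m - 1 : ℕ) : ℤ) = (q:ℤ) - 1 := by
    have h1 : (1:ℕ) ≤ 2^m := Nat.one_le_two_pow
    rw [hq]
    omega
  have hd1 : u ^ d = u ^ (1 - 2*(s:ℤ)) := by
    have hdz : (d:ℤ) = (1 - 2*(s:ℤ)) + ((q:ℤ)+1) * s := by
      rw [hd]
      push_cast [hcast, show ((q - 1 : ℕ) : ℤ) = (q:ℤ) - 1 from hcast]
      ring
    rw [← zpow_natCast u d, hdz, key]
  have hd2 : (u ^ d) ^ q = u ^ (2*(s:ℤ) - 1) := by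
    rw [← pow_mul, ← zpow_natCast u (d*q)]
    have hdq : ((d*q : ℕ) : ℤ) = (2*(s:ℤ) - 1) + ((q:ℤ)+1) * ((s:ℤ)*q - 2*s + 1) := by
      push_cast [hd, hcast, show ((q - 1 : ℕ) : ℤ) = (q:ℤ) - 1 from hcast]
      ring
    rw [hdq, key]
  have hq1 : u ^ q = u ^ (-1 : ℤ) := by
    rw [← zpow_natCast u q]
    have h3 : ((q:ℕ) : ℤ) = (-1) + ((q:ℤ)+1) * 1 := by ring
    rw [h3, key]
  have hmulpow : (u^d + a*u)^q = u ^ (2*(s:ℤ)-1) + a^q * u^(-1:ℤ) := by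
    rw [hq, add_pow_char_pow, ← hq, mul_pow, hd2, hq1]
  rw [hmulpow, hd1]
  have hw : u ^ (2*(s:ℤ)-1) ≠ 0 := zpow_ne_zero _ hu0
  rw [← mul_left_inj' hw]
  have e1 : (u ^ (2*(s:ℤ)-1) + a^q * u^(-1:ℤ)) * u ^ (2*(s:ℤ)-1)
      = u ^ (4*(s:ℤ)-2) + a^q * u^(2*(s:ℤ)-2) := by
    rw [add_mul, ← zpow_add₀ hu0, mul_assoc, ← zpow_add₀ hu0,
      show (2*(s:ℤ)-1) + (2*(s:ℤ)-1) = 4*(s:ℤ)-2 by ring,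
      show (-1:ℤ) + (2*(s:ℤ)-1) = 2*(s:ℤ)-2 by ring]
  have e2 : (u ^ (1-2*(s:ℤ)) + a * u) * u ^ (2*(s:ℤ)-1) = 1 + a * u^(2*(s:ℤ)) := by
    rw [add_mul, ← zpow_add₀ hu0, mul_assoc,
      show (1-2*(s:ℤ)) + (2*(s:ℤ)-1) = 0 by ring, zpow_zero]
    congr 1
    rw [← zpow_one_add₀ hu0, show (1:ℤ) + (2*(s:ℤ)-1) = 2*(s:ℤ) by ring]
  have hu2 : ∀ k : ℤ, (u^2) ^ k = u ^ (2*k) := by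
    intro k
    rw [show u^2 = u^((2:ℕ):ℤ) from (zpow_natCast u 2).symm, ← zpow_mul]
    norm_num
  rw [e1, e2, hu2, hu2, hu2,
    show (2:ℤ)*(2*(s:ℤ)-1) = 4*(s:ℤ)-2 by ring,
    show (2:ℤ)*((s:ℤ)-1) = 2*(s:ℤ)-2 by ring]
  rw [← sub_eq_zero, CharTwo.sub_eq_add]
  constructor <;> intro h <;> linear_combination h
/-- Niho's lemma (binary case): for a Niho exponent `d = s(2^m - 1) + 1`,
the Walsh transform `W_d(a)` equals `(N(a) - 1)·2^m`, where `N(a)` counts the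
solutions on the unit circle of `x^{2s-1} + a x^s + ā x^{s-1} + 1 = 0`. -/
theorem niho_walsh_unit_circle (m : ℕ) (hm : 1 ≤ m) (s : ℕ)
    (d : ℕ) (hd : d = s * (2 ^ m - 1) + 1)
    (hgcd : Nat.gcd d (2 ^ (2 * m) - 1) = 1)
    (a : GaloisField 2 (2 * m)) (ha : a ≠ 0) :
    (∑ x : GaloisField 2 (2 * m), ew 2 (Tr 2 (2 * m) (x ^ d + a * x)))
      = ((Nat.card {x : GaloisField 2 (2 * m) //
            x * x ^ (2 ^ m) = 1 ∧
            x ^ (2 * (s : ℤ) - 1) + a * x ^ (s : ℤ)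
              + a ^ (2 ^ m) * x ^ ((s : ℤ) - 1) + 1 = 0} : ℂ) - 1) * 2 ^ m := by
  classical
  have hn : 2*m ≠ 0 := by omega
  set q : ℕ := 2^m with hq
  have hq2 : 2 ≤ q := by
    rw [hq]
    calc (2:ℕ) = 2^1 := by norm_num
      _ ≤ 2^m := Nat.pow_le_pow_right (by norm_num) hm
  have hQcard : Fintype.card (GaloisField 2 (2*m)) = 2^(2*m) := gf_card _ hn
  have hqq : q * q = 2^(2*m) := by rw [hq, ← pow_add, two_mul]
  obtain ⟨hUcard0, hKstar⟩ := card_circle (GaloisField 2 (2*m)) q hq2 (by rw [hQcard, ← hqq])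
  have hpc : ∀ x : GaloisField 2 (2*m), x ^ 2^(2*m) = x := fun x => by
    rw [← hQcard]; exact FiniteField.pow_card x
  have hQ1 : ∀ x : GaloisField 2 (2*m), x ≠ 0 → x^(2^(2*m) - 1) = 1 := fun x hx => by
    rw [← hQcard]; exact FiniteField.pow_card_sub_one_eq_one x hx
  have hKinv : ∀ y : GaloisField 2 (2*m), y ≠ 0 → y ^ q = y → y^(q-1) = 1 := by
    intro y hy hyq
    have h1 : y^(q-1) * y = 1 * y := by
      rw [← pow_succ, show q-1+1 = q by omega, hyq, one_mul]
    exact mul_right_cancel₀ hy h1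
  have hKpow : ∀ y : GaloisField 2 (2*m), y^(q-1) = 1 → y ^ q = y := by
    intro y h
    rw [show q = (q-1)+1 by omega, pow_succ, h, one_mul]
  set K : Finset (GaloisField 2 (2*m)) :=
    Finset.univ.filter (fun x => x ^ q = x) with hK
  set U : Finset (GaloisField 2 (2*m)) :=
    Finset.univ.filter (fun x => x * x ^ q = 1) with hU
  have hUiff : ∀ x : GaloisField 2 (2*m), x * x ^ q = 1 ↔ x ^ (q+1) = 1 := by
    intro x
    rw [pow_succ, mul_comm (x^q) x]
  have hUmem : ∀ x : GaloisField 2 (2*m), x ∈ U ↔ x ^ (q+1) = 1 := by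
    intro x
    rw [hU, Finset.mem_filter]
    simp only [Finset.mem_univ, true_and]
    exact hUiff x
  have hUcard : U.card = q + 1 := by
    have : U = Finset.univ.filter (fun x => x ^ (q+1) = 1) := by
      ext x
      rw [hUmem x, Finset.mem_filter]
      simp only [Finset.mem_univ, true_and]
    rw [this]
    exact hUcard0
  have hKmem : ∀ x : GaloisField 2 (2*m), x ∈ K ↔ x ^ q = x := by
    intro x
    rw [hK, Finset.mem_filter]
    simp only [Finset.mem_univ, true_and]
  have hKcard : K.card = q := by
    have hKeq : K = insert 0 (Finset.univ.filter fun x : GaloisField 2 (2*m) => x ^ (q-1) = 1) := by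
      ext x
      rw [hKmem x]
      simp only [Finset.mem_insert, Finset.mem_filter, Finset.mem_univ, true_and]
      constructor
      · intro hx
        rcases eq_or_ne x 0 with h | h
        · exact Or.inl h
        · exact Or.inr (hKinv x h hx)
      · rintro (rfl | hx)
        · exact zero_pow (by omega)
        · exact hKpow x hx
    rw [hKeq, Finset.card_insert_of_notMem, hKstar]
    · omega
    · simp only [Finset.mem_filter, Finset.mem_univ, true_and]
      rw [zero_pow (by omega)]
      exact fun h => one_ne_zero h.symm
  have h0K : (0:GaloisField 2 (2*m)) ∈ K := (hKmem 0).mpr (zero_pow (by omega))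
  have hUne : ∀ u ∈ U, u ≠ 0 := by
    intro u hu h0
    have h1 := (hUmem u).mp hu
    rw [h0, zero_pow (by omega)] at h1
    exact one_ne_zero h1.symm
  -- exponents for the polar decomposition
  set E1 : ℕ := 2^(m-1) * (q-1) with hE1
  set E2 : ℕ := 2^(m-1) * (q+1) with hE2
  have hpm : 2^(m-1) * 2 = q := by
    rw [hq, ← pow_succ]
    congr 1
    omega
  have harith : (q-1)*(q+1) = 2^(2*m) - 1 := by
    have h1 : 1 ≤ q := by omega
    have h2 : 1 ≤ q * q := by nlinarith
    have h3 : (q-1)*(q+1) = q*q - 1 := by zify [h1, h2]; ring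
    rw [h3, hqq]
  have hE12 : E2 + E1 = 2^(2*m) := by
    have h2 : (q-1)+(q+1) = 2*q := by omega
    calc E2 + E1 = 2^(m-1) * ((q-1)+(q+1)) := by rw [hE1, hE2, ← Nat.mul_add]; ring_nf
      _ = 2^(m-1) * (2*q) := by rw [h2]
      _ = (2^(m-1) * 2) * q := by ring
      _ = q * q := by rw [hpm]
      _ = 2^(2*m) := hqq
  have hE1q : E1 + q = E2 := by
    calc E1 + q = 2^(m-1)*(q-1) + 2^(m-1)*2 := by rw [hpm]
      _ = 2^(m-1)*((q-1)+2) := by rw [Nat.mul_add]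
      _ = 2^(m-1)*(q+1) := by congr 1; omega
  have hxE1U : ∀ x : GaloisField 2 (2*m), x ≠ 0 → x^E1 ∈ U := by
    intro x hx
    rw [hUmem]
    rw [← pow_mul]
    have h1 : E1 * (q+1) = (2^(2*m) - 1) * 2^(m-1) := by
      calc E1 * (q+1) = 2^(m-1) * ((q-1) * (q+1)) := by rw [hE1]; ring
        _ = 2^(m-1) * (2^(2*m) - 1) := by rw [harith]
        _ = (2^(2*m) - 1) * 2^(m-1) := by ring
    rw [h1, pow_mul, hQ1 x hx, one_pow]
  have hxE2K : ∀ x : GaloisField 2 (2*m), x ≠ 0 → (x^E2 ∈ K ∧ x^E2 ≠ 0) := by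
    intro x hx
    have hne : x^E2 ≠ 0 := pow_ne_zero _ hx
    refine ⟨(hKmem _).mpr ?_, hne⟩
    apply hKpow
    rw [← pow_mul]
    have h1 : E2 * (q-1) = (2^(2*m) - 1) * 2^(m-1) := by
      calc E2 * (q-1) = 2^(m-1) * ((q-1) * (q+1)) := by rw [hE2]; ring
        _ = 2^(m-1) * (2^(2*m) - 1) := by rw [harith]
        _ = (2^(2*m) - 1) * 2^(m-1) := by ring
    rw [h1, pow_mul, hQ1 x hx, one_pow]
  have hlam1 : ∀ l : GaloisField 2 (2*m), l ∈ K → l ≠ 0 → l^E1 = 1 := by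
    intro l hl hlne
    have h1 : l^(q-1) = 1 := hKinv l hlne ((hKmem l).mp hl)
    rw [hE1, mul_comm (2^(m-1)) (q-1), pow_mul, h1, one_pow]
  have hu_powE2 : ∀ u ∈ U, u^E2 = 1 := by
    intro u hu
    have h1 : u^(q+1) = 1 := (hUmem u).mp hu
    rw [hE2, mul_comm (2^(m-1)) (q+1), pow_mul, h1, one_pow]
  have huE1 : ∀ u ∈ U, u^E1 = u := by
    intro u hu
    have hu0 := hUne u hu
    have h1 : u^E1 * u^q = 1 := by
      rw [← pow_add, hE1q]
      exact hu_powE2 u hu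
    have h2 : u * u^q = 1 := (hUiff u).mpr ((hUmem u).mp hu)
    exact mul_right_cancel₀ (pow_ne_zero _ hu0) (h1.trans h2.symm)
  have hlamE2 : ∀ l : GaloisField 2 (2*m), l ∈ K → l ≠ 0 → l^E2 = l := by
    intro l hl hlne
    rw [← hE1q, pow_add, hlam1 l hl hlne, one_mul]
    exact (hKmem l).mp hl
  have hrecomb : ∀ x : GaloisField 2 (2*m), x^E2 * x^E1 = x := by
    intro x
    rw [← pow_add, hE12]
    exact hpc x
  have hd0 : d ≠ 0 := by rw [hd]; exact Nat.succ_ne_zero _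
  have hTr0 : Tr 2 (2*m) 0 = 0 := by simp [Tr]
  -- Step A : split off x = 0
  have hsplit0 : ∑ x : GaloisField 2 (2*m), ew 2 (Tr 2 (2*m) (x^d + a*x))
      = 1 + ∑ x ∈ Finset.univ.erase 0, ew 2 (Tr 2 (2*m) (x^d + a*x)) := by
    rw [← Finset.add_sum_erase _ _ (Finset.mem_univ (0 : GaloisField 2 (2*m)))]
    congr 1
    rw [zero_pow hd0, mul_zero, add_zero, hTr0, ew_zero]
  -- Step B : reindex the nonzero sum over U × (K \ {0})
  have hreindex : ∑ x ∈ Finset.univ.erase 0, ew 2 (Tr 2 (2*m) (x^d + a*x))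
      = ∑ p ∈ U ×ˢ (K.erase 0), ew 2 (Tr 2 (2*m) ((p.2 * p.1)^d + a*(p.2 * p.1))) := by
    refine Finset.sum_nbij' (i := fun x => (x^E1, x^E2)) (j := fun p => p.2 * p.1)
      ?_ ?_ ?_ ?_ ?_
    · intro x hx
      have hx0 : x ≠ 0 := (Finset.mem_erase.mp hx).1
      refine Finset.mem_product.mpr ⟨hxE1U x hx0, ?_⟩
      obtain ⟨hK2, hne2⟩ := hxE2K x hx0
      exact Finset.mem_erase.mpr ⟨hne2, hK2⟩
    · intro p hp
      obtain ⟨hp1, hp2⟩ := Finset.mem_product.mp hp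
      exact Finset.mem_erase.mpr
        ⟨mul_ne_zero (Finset.mem_erase.mp hp2).1 (hUne _ hp1), Finset.mem_univ _⟩
    · intro x hx
      exact hrecomb x
    · intro p hp
      obtain ⟨hp1, hp2⟩ := Finset.mem_product.mp hp
      have hlK := (Finset.mem_erase.mp hp2).2
      have hlne := (Finset.mem_erase.mp hp2).1
      have h1 : (p.2 * p.1)^E1 = p.1 := by
        rw [mul_pow, hlam1 _ hlK hlne, one_mul, huE1 _ hp1]
      have h2 : (p.2 * p.1)^E2 = p.2 := by
        rw [mul_pow, hlamE2 _ hlK hlne, hu_powE2 _ hp1, mul_one]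
      show ((p.2 * p.1)^E1, (p.2 * p.1)^E2) = p
      rw [h1, h2]
    · intro x hx
      rw [hrecomb x]
  -- Step C+D : inner sums
  have hinner : ∀ u ∈ U, (∑ l ∈ K.erase 0, ew 2 (Tr 2 (2*m) ((l * u)^d + a*(l * u))))
      = (if (u^d + a*u)^q = u^d + a*u then ((q:ℕ):ℂ) else 0) - 1 := by
    intro u hu
    have hueq : ∀ l ∈ K.erase 0, (l * u)^d + a*(l * u) = l * (u^d + a*u) := by
      intro l hl
      have hlK := (Finset.mem_erase.mp hl).2
      have hlne := (Finset.mem_erase.mp hl).1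
      have hld : l^d = l := by
        rw [hd, pow_succ, show s*(q-1) = (q-1)*s by ring, pow_mul,
          hKinv l hlne ((hKmem l).mp hlK), one_pow, one_mul]
      rw [mul_pow, hld]
      ring
    have hueq' : ∀ l ∈ K.erase 0, ew 2 (Tr 2 (2*m) ((l * u)^d + a*(l * u)))
        = ew 2 (Tr 2 (2*m) (l * (u^d + a*u))) := fun l hl => by rw [hueq l hl]
    rw [Finset.sum_congr rfl hueq']
    have h3 := niho_inner_sum m hm K (fun x => by rw [hKmem x, hq]) (by rw [hKcard, hq])
      (u^d + a*u)
    rw [← hq] at h3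
    have h2 : (∑ l ∈ K, ew 2 (Tr 2 (2*m) (l * (u^d + a*u))))
        = ew 2 (Tr 2 (2*m) (0 * (u^d + a*u)))
          + ∑ l ∈ K.erase 0, ew 2 (Tr 2 (2*m) (l * (u^d + a*u))) :=
      (Finset.add_sum_erase K _ h0K).symm
    rw [zero_mul, hTr0, ew_zero, h3] at h2
    linear_combination -h2
  -- assemble
  rw [hsplit0, hreindex, Finset.sum_product, Finset.sum_congr rfl hinner,
    Finset.sum_sub_distrib, Finset.sum_const, ← Finset.sum_filter, Finset.sum_const]
  -- Step F : change of variables u ↦ u² in the count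
  have htwo : 2 * 2^(2*m - 1) = 2^(2*m) := by
    rw [← pow_succ']
    congr 1
    omega
  have hsq : ∀ v : GaloisField 2 (2*m), (v^(2^(2*m-1)))^2 = v := by
    intro v
    rw [← pow_mul, mul_comm (2^(2*m-1)) 2, htwo]
    exact hpc v
  have hsq2 : ∀ u : GaloisField 2 (2*m), (u^2)^(2^(2*m-1)) = u := by
    intro u
    rw [← pow_mul, htwo]
    exact hpc u
  have hUpow : ∀ k : ℕ, ∀ u ∈ U, u^k ∈ U := by
    intro k u hu
    rw [hUmem, ← pow_mul, mul_comm k (q+1), pow_mul, (hUmem u).mp hu, one_pow]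
  have hNcount : (U.filter (fun u => (u^d + a*u)^q = u^d + a*u)).card
      = (U.filter (fun x => x ^ (2*(s:ℤ) - 1) + a * x ^ (s:ℤ)
          + a^q * x^((s:ℤ)-1) + 1 = 0)).card := by
    refine Finset.card_nbij' (i := fun u => u^2) (j := fun v => v^(2^(2*m - 1)))
      ?_ ?_ ?_ ?_
    · intro u hu
      obtain ⟨huU, hcond⟩ := Finset.mem_filter.mp hu
      refine Finset.mem_filter.mpr ⟨hUpow 2 u huU, ?_⟩
      exact (cond_equiv m s d hm hd a u ((hUmem u).mp huU)).mp hcond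
    · intro v hv
      obtain ⟨hvU, hcond⟩ := Finset.mem_filter.mp hv
      refine Finset.mem_filter.mpr ⟨hUpow _ v hvU, ?_⟩
      refine (cond_equiv m s d hm hd a _ ((hUmem _).mp (hUpow _ v hvU))).mpr ?_
      rw [hsq v]
      exact hcond
    · intro u hu
      exact hsq2 u
    · intro v hv
      exact hsq v
  rw [hNcount, hUcard]
  -- Step G : identify the subtype count
  have hNat : (Nat.card {x : GaloisField 2 (2*m) //
        x * x ^ q = 1 ∧ x ^ (2*(s:ℤ) - 1) + a * x ^ (s:ℤ)
          + a ^ q * x ^ ((s:ℤ) - 1) + 1 = 0})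
      = (U.filter (fun x => x ^ (2*(s:ℤ) - 1) + a * x ^ (s:ℤ)
          + a^q * x^((s:ℤ)-1) + 1 = 0)).card := by
    rw [Nat.card_eq_fintype_card, Fintype.card_subtype, hU, Finset.filter_filter]
  rw [hNat]
  -- Step H : final arithmetic
  rw [hq]
  push_cast
  ring
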